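/- (NFP mean progress) Let λ > 0, 0 < p < 1, β > 0, α > 2, L ≥ 1, and Δ = (2π/α)Γ(2/α)Γ(1-2/α). Suppose R has CDF P(R ≤ r) = 1 - exp(-λ(1-p)(π/2) r²), Θ is uniform on [-π/2,π/2] independent of R, and P_s(r) = Σ_{k=0}^{L-1} (λ p Δ β^{2/α} r²)^k/k! · exp(-λ p Δ β^{2/α} r²). Then E[R cos Θ · P_s(R)] = (1/√λ) Σ_{k=0}^{L-1} Γ(k+3/2) (β^{2/α}Δ)^k p^k (1-p) / (k! ((1-p)π/2 + Δβ^{2/α} p)^{k+3/2}). -/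

import Mathlib

open MeasureTheory Real Set ProbabilityTheory
open scoped ENNReal NNReal

lemma gauss_moment (k : ℕ) {c : ℝ} (hc : 0 < c) :
    ∫ x in Ioi (0:ℝ), x ^ (2*k+2) * Real.exp (-(c * x^2))
      = Real.Gamma ((k:ℝ) + 3/2) / (2 * c ^ ((k:ℝ) + 3/2)) := by
  have h := integral_rpow_mul_exp_neg_mul_rpow (p := 2) (q := ((2*k+2 : ℕ) : ℝ))
    two_pos (by push_cast; linarith [Nat.cast_nonneg (α := ℝ) k]) hc
  have heq : ∫ x in Ioi (0:ℝ), x ^ (2*k+2) * Real.exp (-(c * x^2))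
      = ∫ x in Ioi (0:ℝ), x ^ ((2*k+2 : ℕ) : ℝ) * Real.exp (-c * x ^ (2:ℝ)) := by
    refine setIntegral_congr_fun measurableSet_Ioi (fun x hx => ?_)
    rw [Real.rpow_natCast, show (2:ℝ) = ((2:ℕ):ℝ) by norm_num, Real.rpow_natCast, neg_mul]
  rw [heq, h]
  have h1 : (-(((2*k+2 : ℕ) : ℝ) + 1) / 2) = -((k:ℝ) + 3/2) := by push_cast; ring
  have h2 : ((((2*k+2 : ℕ) : ℝ)) + 1) / 2 = (k:ℝ) + 3/2 := by push_cast; ring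
  rw [h1, h2, Real.rpow_neg hc.le]
  ring


lemma ftc_ray {a : ℝ} (x : ℝ) (hx : 0 ≤ x) :
    ∫ t in (0:ℝ)..x, 2*a*t*Real.exp (-a*t^2) = 1 - Real.exp (-a*x^2) := by
  have deriv : ∀ t : ℝ, HasDerivAt (fun t => -Real.exp (-a*t^2))
      (2*a*t*Real.exp (-a*t^2)) t := by
    intro t
    have h1 : HasDerivAt (fun t : ℝ => -a*t^2) (-a*(2*t^1)) t :=
      (hasDerivAt_pow 2 t).const_mul (-a) |>.congr_deriv (by push_cast; ring)
    have h2 := (h1.exp).neg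
    refine h2.congr_deriv ?_
    ring
  have hcont : Continuous (fun t : ℝ => 2*a*t*Real.exp (-a*t^2)) := by fun_prop
  rw [intervalIntegral.integral_eq_sub_of_hasDerivAt (fun t _ => deriv t)
    (hcont.intervalIntegrable _ _)]
  simp
  ring

lemma map_eq_withDensity {Ω : Type*} [MeasureSpace Ω] (P : Measure Ω) [IsProbabilityMeasure P]
    {a : ℝ} (ha : 0 < a) (R : Ω → ℝ) (hR : Measurable R) (hRpos : ∀ ω, 0 ≤ R ω)
    (hcdf : ∀ r, 0 ≤ r → (P {ω | R ω ≤ r}).toReal = 1 - Real.exp (-a * r^2)) :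
    Measure.map R P = volume.withDensity
      (fun r => ENNReal.ofReal ((Ioi (0:ℝ)).indicator (fun r => 2*a*r*Real.exp (-a*r^2)) r)) := by
  haveI : IsProbabilityMeasure (Measure.map R P) := Measure.isProbabilityMeasure_map hR.aemeasurable
  set φ : ℝ → ℝ := fun r => 2*a*r*Real.exp (-a*r^2) with hφ
  set fden : ℝ → ℝ := (Ioi (0:ℝ)).indicator φ with hfden
  have hφc : Continuous φ := by fun_prop
  have hnn : ∀ r, 0 ≤ fden r :=
    Set.indicator_nonneg (fun r hr => by have h0 : (0:ℝ) < r := mem_Ioi.mp hr; positivity)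
  refine Measure.ext_of_Iic _ _ (fun x => ?_)
  have hmap : Measure.map R P (Iic x) = P {ω | R ω ≤ x} := by
    rw [Measure.map_apply hR measurableSet_Iic]; rfl
  rcases lt_or_ge x 0 with hx | hx
  · have hz : ∀ᵐ y ∂(volume.restrict (Iic x)),
        (fun y => ENNReal.ofReal (fden y)) y = (0 : ℝ≥0∞) :=
      (ae_restrict_iff' measurableSet_Iic).2 (ae_of_all _ (fun y hy => by
        show ENNReal.ofReal ((Ioi (0:ℝ)).indicator φ y) = 0
        rw [Set.indicator_of_notMem
          (by simp only [mem_Ioi, not_lt]; exact le_trans hy hx.le), ENNReal.ofReal_zero]))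
    rw [hmap, show {ω | R ω ≤ x} = (∅ : Set Ω) from
      Set.eq_empty_iff_forall_notMem.2 (fun ω h => absurd (le_trans (hRpos ω) h) (not_le.2 hx)),
      measure_empty, withDensity_apply _ measurableSet_Iic, lintegral_congr_ae hz, lintegral_zero]
  · have hint : IntegrableOn fden (Iic x) := by
      rw [IntegrableOn, hfden, integrable_indicator_iff measurableSet_Ioi]
      rw [IntegrableOn, Measure.restrict_restrict measurableSet_Ioi, Set.Ioi_inter_Iic]
      exact hφc.integrableOn_Ioc
    rw [hmap, ← ENNReal.ofReal_toReal (measure_ne_top P {ω | R ω ≤ x}), hcdf x hx,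
      withDensity_apply _ measurableSet_Iic,
      ← ofReal_integral_eq_lintegral_ofReal hint (ae_of_all _ hnn)]
    congr 1
    rw [hfden, integral_indicator measurableSet_Ioi,
      Measure.restrict_restrict measurableSet_Ioi, Set.Ioi_inter_Iic,
      ← intervalIntegral.integral_of_le hx]
    exact (ftc_ray x hx).symm

theorem stmt5 {Ω : Type*} [MeasureSpace Ω] (P : Measure Ω) [IsProbabilityMeasure P]
    (lam p β α : ℝ) (L : ℕ) (hlam : 0 < lam) (hp : 0 < p) (hp1 : p < 1) (hβ : 0 < β)
    (hα : 2 < α) (hL : 1 ≤ L)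
    (Δ : ℝ) (hΔ : Δ = (2 * Real.pi / α) * Real.Gamma (2 / α) * Real.Gamma (1 - 2 / α))
    (R Θ : Ω → ℝ) (hR : Measurable R) (hΘ : Measurable Θ) (hRpos : ∀ ω, 0 ≤ R ω)
    (hcdf : ∀ r : ℝ, 0 ≤ r →
      (P {ω | R ω ≤ r}).toReal = 1 - Real.exp (-(lam * (1 - p) * (Real.pi / 2)) * r ^ 2))
    (hunif : Measure.map Θ P
      = (ENNReal.ofReal Real.pi)⁻¹ • volume.restrict (Set.Icc (-(Real.pi / 2)) (Real.pi / 2)))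
    (hindep : IndepFun R Θ P)
    (Ps : ℝ → ℝ)
    (hPs : ∀ r, Ps r = ∑ k ∈ Finset.range L,
      (lam * p * Δ * β ^ (2 / α) * r ^ 2) ^ k / (Nat.factorial k)
        * Real.exp (-(lam * p * Δ * β ^ (2 / α) * r ^ 2))) :
    (∫ ω, R ω * Real.cos (Θ ω) * Ps (R ω) ∂P)
      = (1 / Real.sqrt lam) * ∑ k ∈ Finset.range L,
          Real.Gamma (k + 3 / 2) * (β ^ (2 / α) * Δ) ^ k * p ^ k * (1 - p)
            / ((Nat.factorial k)
              * ((1 - p) * Real.pi / 2 + Δ * β ^ (2 / α) * p) ^ ((k : ℝ) + 3 / 2)) := by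
  have hπ := Real.pi_pos
  have hΔpos : 0 < Δ := by
    rw [hΔ]
    have h1 : 0 < 2 / α := by positivity
    have h2 : 0 < 1 - 2 / α := by
      have : 2 / α < 1 := (div_lt_one (by linarith)).2 (by linarith)
      linarith
    have := Real.Gamma_pos_of_pos h1
    have := Real.Gamma_pos_of_pos h2
    positivity
  have he : (0:ℝ) < β ^ (2 / α) := Real.rpow_pos_of_pos hβ _
  set b := lam * p * Δ * β ^ (2 / α) with hbdef
  set a := lam * (1 - p) * (Real.pi / 2) with hadef
  have h1p : (0:ℝ) < 1 - p := by linarith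
  have ha : 0 < a := by rw [hadef]; positivity
  have hb : 0 < b := by rw [hbdef]; positivity
  set c := a + b with hcdef
  have hc : 0 < c := by positivity
  -- measurability of Ps
  have hPsm : Measurable Ps := by
    have : Ps = fun r => ∑ k ∈ Finset.range L,
        (b * r ^ 2) ^ k / (Nat.factorial k) * Real.exp (-(b * r ^ 2)) := funext hPs
    rw [this]
    exact Finset.measurable_sum _ (fun k _ => by fun_prop)
  have hg : Measurable (fun r : ℝ => r * Ps r) := measurable_id.mul hPsm
  -- Step A : independence split
  have hsplit : (∫ ω, R ω * Real.cos (Θ ω) * Ps (R ω) ∂P)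
      = (∫ ω, R ω * Ps (R ω) ∂P) * ∫ ω, Real.cos (Θ ω) ∂P := by
    have hi : IndepFun ((fun r => r * Ps r) ∘ R) (Real.cos ∘ Θ) P :=
      hindep.comp hg measurable_cos
    have h2 := hi.integral_mul_eq_mul_integral ((hg.comp hR)).aestronglyMeasurable
      ((measurable_cos.comp hΘ)).aestronglyMeasurable
    have e1 : (∫ ω, R ω * Real.cos (Θ ω) * Ps (R ω) ∂P)
        = ∫ ω, (((fun r => r * Ps r) ∘ R) * (Real.cos ∘ Θ)) ω ∂P :=
      integral_congr_ae (ae_of_all _ (fun ω => by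
        simp only [Pi.mul_apply, Function.comp_apply]; ring))
    exact e1.trans h2
  -- Step B : cosine integral
  have hcos : ∫ ω, Real.cos (Θ ω) ∂P = 2 / Real.pi := by
    rw [← integral_map hΘ.aemeasurable measurable_cos.aestronglyMeasurable, hunif,
      integral_smul_measure, MeasureTheory.integral_Icc_eq_integral_Ioc,
      ← intervalIntegral.integral_of_le (by linarith), integral_cos]
    simp only [Real.sin_pi_div_two, Real.sin_neg]
    rw [ENNReal.toReal_inv, ENNReal.toReal_ofReal hπ.le]
    rw [smul_eq_mul]
    ring
  -- Step C : mean over R via density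
  have hmean : ∫ ω, R ω * Ps (R ω) ∂P
      = ∑ k ∈ Finset.range L,
          (2 * a * b ^ k / (Nat.factorial k : ℝ))
            * (Real.Gamma ((k:ℝ) + 3/2) / (2 * c ^ ((k:ℝ) + 3/2))) := by
    have hmapR := map_eq_withDensity P ha R hR hRpos hcdf
    have h1 : ∫ ω, R ω * Ps (R ω) ∂P = ∫ r, r * Ps r ∂(Measure.map R P) :=
      (integral_map hR.aemeasurable hg.aestronglyMeasurable).symm
    set φ : ℝ → ℝ := fun r => 2*a*r*Real.exp (-a*r^2) with hφdef
    set fden : ℝ → ℝ := (Ioi (0:ℝ)).indicator φ with hfdendef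
    have hφc : Continuous φ := by fun_prop
    have hfnn : ∀ r, 0 ≤ fden r :=
      Set.indicator_nonneg (fun r hr => by have h0 : (0:ℝ) < r := mem_Ioi.mp hr; positivity)
    have hfm : Measurable fden := hφc.measurable.indicator measurableSet_Ioi
    have h2 : ∫ r, r * Ps r ∂(Measure.map R P) = ∫ r, fden r * (r * Ps r) := by
      rw [hmapR]
      have hrw : (fun r => ENNReal.ofReal (fden r))
          = (fun r => ((fun r => (fden r).toNNReal) r : ℝ≥0∞)) := rfl
      have hfm' : Measurable (fun r => (fden r).toNNReal) := measurable_real_toNNReal.comp hfm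
      rw [hrw, integral_withDensity_eq_integral_smul hfm']
      exact integral_congr_ae (ae_of_all _ (fun r => by
        simp [NNReal.smul_def, Real.coe_toNNReal _ (hfnn r)]))
    have h3 : ∫ r, fden r * (r * Ps r)
        = ∫ r in Ioi (0:ℝ), φ r * (r * Ps r) := by
      rw [← integral_indicator measurableSet_Ioi]
      refine integral_congr_ae (ae_of_all _ (fun r => ?_))
      show fden r * (r * Ps r) = (Ioi (0:ℝ)).indicator (fun r => φ r * (r * Ps r)) r
      exact (Set.indicator_mul_left (Ioi (0:ℝ)) φ (fun r => r * Ps r)).symm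
    have hpt : ∀ r : ℝ, φ r * (r * Ps r)
        = ∑ k ∈ Finset.range L,
            (2 * a * b ^ k / (Nat.factorial k : ℝ)) * (r ^ (2*k+2) * Real.exp (-(c * r^2))) := by
      intro r
      rw [hPs, Finset.mul_sum, Finset.mul_sum]
      refine Finset.sum_congr rfl (fun k _ => ?_)
      have hexp : Real.exp (-(c * r^2)) = Real.exp (-a*r^2) * Real.exp (-(b * r^2)) := by
        rw [← Real.exp_add]; congr 1; rw [hcdef]; ring
      have hfac : (0:ℝ) < (Nat.factorial k : ℝ) := by positivity
      rw [hexp, hφdef, mul_pow, ← pow_mul]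
      field_simp
      ring
    have hintk : ∀ k : ℕ, IntegrableOn
        (fun r : ℝ => (2 * a * b ^ k / (Nat.factorial k : ℝ))
          * (r ^ (2*k+2) * Real.exp (-(c * r^2)))) (Ioi (0:ℝ)) := by
      intro k
      apply Integrable.const_mul
      have h := integrableOn_rpow_mul_exp_neg_mul_sq hc
        (s := ((2*k+2 : ℕ) : ℝ)) (by push_cast; linarith [Nat.cast_nonneg (α := ℝ) k])
      have : (fun x : ℝ => x ^ ((2*k+2 : ℕ) : ℝ) * Real.exp (-c * x ^ 2))
          = fun r : ℝ => r ^ (2*k+2) * Real.exp (-(c * r^2)) := by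
        funext x; rw [Real.rpow_natCast, neg_mul]
      rwa [this] at h
    rw [h1, h2, h3]
    rw [integral_congr_ae (ae_of_all _ (fun r => hpt r))]
    rw [integral_finset_sum _ (fun k _ => hintk k)]
    refine Finset.sum_congr rfl (fun k _ => ?_)
    rw [MeasureTheory.integral_const_mul, gauss_moment k hc]
  -- Final algebra
  rw [hsplit, hcos, hmean, Finset.sum_mul, Finset.mul_sum]
  refine Finset.sum_congr rfl (fun k _ => ?_)
  set d := (1 - p) * Real.pi / 2 + Δ * β ^ (2 / α) * p with hddef
  have hd : 0 < d := by rw [hddef]; positivity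
  have hcd : c = lam * d := by rw [hcdef, hadef, hbdef, hddef]; ring
  have hds : (0:ℝ) < d ^ ((k:ℝ) + 3/2) := Real.rpow_pos_of_pos hd _
  have hlpow : lam ^ ((k:ℝ) + 3/2) = lam ^ (k+1) * Real.sqrt lam := by
    rw [show (k:ℝ) + 3/2 = ((k+1 : ℕ) : ℝ) + (1/2 : ℝ) by push_cast; ring,
      Real.rpow_add hlam, Real.rpow_natCast, Real.sqrt_eq_rpow]
  have hcs : c ^ ((k:ℝ) + 3/2) = (lam ^ (k+1) * Real.sqrt lam) * d ^ ((k:ℝ) + 3/2) := by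
    rw [hcd, Real.mul_rpow hlam.le hd.le, hlpow]
  rw [hcs, hbdef]
  have hsq : (0:ℝ) < Real.sqrt lam := Real.sqrt_pos.2 hlam
  have hfac : (0:ℝ) < (Nat.factorial k : ℝ) := by positivity
  have hΓ : (0:ℝ) < Real.Gamma ((k:ℝ) + 3/2) := Real.Gamma_pos_of_pos (by positivity)
  field_simp
  ring
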